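/- Let Ω ⊆ ℝ^n be a nonempty open set, η : Ω → ℝ continuously differentiable, c : Ω → ℝ continuous, and λ ∈ ℝ. Suppose v and φ are twice continuously differentiable on Ω, φ(x) > 0 for all x ∈ Ω, and the pointwise relations Δv + ⟨∇η, ∇v⟩ + c·v ≥ 0 and Δφ + ⟨∇η, ∇φ⟩ + c·φ = −λ·φ hold in Ω. Then, setting σ := v/φ, the pointwise differential inequality div(φ² e^η ∇σ) ≥ λ e^η σ φ² holds everywhere in Ω. -/

import Mathlib

open scoped RealInnerProductSpace
open Topology Filter

/-- The Euclidean Laplacian `Δu = ∑ i ∂²u/∂xᵢ²`. -/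
noncomputable def laplacian {n : ℕ} (u : EuclideanSpace ℝ (Fin n) → ℝ)
    (x : EuclideanSpace ℝ (Fin n)) : ℝ :=
  ∑ i : Fin n, fderiv ℝ (fun y => fderiv ℝ u y (EuclideanSpace.single i 1)) x
    (EuclideanSpace.single i 1)

/-- The Euclidean divergence `div X = ∑ i ∂Xᵢ/∂xᵢ`. -/
noncomputable def divergence {n : ℕ}
    (X : EuclideanSpace ℝ (Fin n) → EuclideanSpace ℝ (Fin n))
    (x : EuclideanSpace ℝ (Fin n)) : ℝ :=
  ∑ i : Fin n, fderiv ℝ X x (EuclideanSpace.single i 1) i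

lemma gradient_apply_single {n : ℕ} (f : EuclideanSpace ℝ (Fin n) → ℝ)
    (x : EuclideanSpace ℝ (Fin n)) (i : Fin n) :
    gradient f x i = fderiv ℝ f x (EuclideanSpace.single i 1) := by
  have h : ⟪gradient f x, EuclideanSpace.single i (1:ℝ)⟫
      = fderiv ℝ f x (EuclideanSpace.single i 1) := by
    simp [gradient, InnerProductSpace.toDual_symm_apply]
  rw [← h, real_inner_comm, EuclideanSpace.inner_single_left]
  simp

lemma inner_gradient_eq_sum {n : ℕ} (f g : EuclideanSpace ℝ (Fin n) → ℝ)
    (x : EuclideanSpace ℝ (Fin n)) :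
    ⟪gradient f x, gradient g x⟫ =
      ∑ i : Fin n, fderiv ℝ f x (EuclideanSpace.single i 1) *
        fderiv ℝ g x (EuclideanSpace.single i 1) := by
  rw [PiLp.inner_apply]
  simp [gradient_apply_single]
  exact Finset.sum_congr rfl fun i _ => mul_comm _ _

/-- Interior inequality relating a subsolution `v` of `L = Δ + ⟨∇η, ∇·⟩ + c` to a
principal eigenfunction `φ`: with `σ = v/φ` one has
`div(φ² e^η ∇σ) ≥ λ e^η σ φ²` in `Ω`. -/
theorem divergence_inequality_subsolution_eigenfunction
    (n : ℕ) (Ω : Set (EuclideanSpace ℝ (Fin n)))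
    (hΩopen : IsOpen Ω) (hΩne : Ω.Nonempty)
    (η c : EuclideanSpace ℝ (Fin n) → ℝ)
    (hη : ContDiffOn ℝ 1 η Ω) (hc : ContinuousOn c Ω)
    (lam : ℝ)
    (v φ : EuclideanSpace ℝ (Fin n) → ℝ)
    (hv : ContDiffOn ℝ 2 v Ω) (hφ : ContDiffOn ℝ 2 φ Ω)
    (hφpos : ∀ x ∈ Ω, 0 < φ x)
    (hvsub : ∀ x ∈ Ω,
      0 ≤ laplacian v x + ⟪gradient η x, gradient v x⟫ + c x * v x)
    (hφeig : ∀ x ∈ Ω,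
      laplacian φ x + ⟪gradient η x, gradient φ x⟫ + c x * φ x = -lam * φ x) :
    ∀ x ∈ Ω,
      lam * Real.exp (η x) * (v x / φ x) * (φ x) ^ 2 ≤
        divergence
          (fun y => ((φ y) ^ 2 * Real.exp (η y)) • gradient (fun z => v z / φ z) y) x := by
  intro x hx
  classical
  set X : EuclideanSpace ℝ (Fin n) → EuclideanSpace ℝ (Fin n) :=
    fun y => ((φ y) ^ 2 * Real.exp (η y)) • gradient (fun z => v z / φ z) y with hXdef
  have hmem : Ω ∈ 𝓝 x := hΩopen.mem_nhds hx
  have hφd : ∀ y ∈ Ω, DifferentiableAt ℝ φ y := fun y hy =>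
    (hφ.contDiffAt (hΩopen.mem_nhds hy)).differentiableAt (by norm_num)
  have hvd : ∀ y ∈ Ω, DifferentiableAt ℝ v y := fun y hy =>
    (hv.contDiffAt (hΩopen.mem_nhds hy)).differentiableAt (by norm_num)
  have hηd : ∀ y ∈ Ω, DifferentiableAt ℝ η y := fun y hy =>
    (hη.contDiffAt (hΩopen.mem_nhds hy)).differentiableAt (by norm_num)
  have hφne : ∀ y ∈ Ω, φ y ≠ 0 := fun y hy => (hφpos y hy).ne'
  -- quotient rule for σ = v/φ
  have hσ' : ∀ y ∈ Ω, HasFDerivAt (fun z => v z / φ z)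
      (v y • (-((φ y) ^ 2)⁻¹ • fderiv ℝ φ y) + (φ y)⁻¹ • fderiv ℝ v y) y := by
    intro y hy
    have hinv : HasFDerivAt (fun z => (φ z)⁻¹) (-((φ y) ^ 2)⁻¹ • fderiv ℝ φ y) y :=
      (hasDerivAt_inv (hφne y hy)).comp_hasFDerivAt y (hφd y hy).hasFDerivAt
    have := (hvd y hy).hasFDerivAt.mul hinv
    simpa [div_eq_mul_inv, Pi.mul_def] using this
  -- differentiability of X at x
  have hσ2 : ContDiffAt ℝ 2 (fun z => v z / φ z) x :=
    (hv.contDiffAt hmem).div (hφ.contDiffAt hmem) (hφne x hx)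
  have hfσd : DifferentiableAt ℝ (fderiv ℝ (fun z => v z / φ z)) x :=
    (hσ2.fderiv_right (m := 1) (by norm_num)).differentiableAt (by norm_num)
  have hGd : DifferentiableAt ℝ (fun y => gradient (fun z => v z / φ z) y) x :=
    ((InnerProductSpace.toDual ℝ
      (EuclideanSpace ℝ (Fin n))).symm.comp_differentiableAt_iff).mpr hfσd
  have hXd : DifferentiableAt ℝ X x :=
    (((hφd x hx).pow 2).mul (hηd x hx).exp).smul hGd
  -- second-order differentiabilities
  have hDvd : ∀ i : Fin n,
      DifferentiableAt ℝ (fun y => fderiv ℝ v y (EuclideanSpace.single i 1)) x := by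
    intro i
    have h1 : DifferentiableAt ℝ (fderiv ℝ v) x :=
      ((hv.contDiffAt hmem).fderiv_right (m := 1) (by norm_num)).differentiableAt (by norm_num)
    exact (ContinuousLinearMap.apply ℝ ℝ
      (EuclideanSpace.single i 1)).differentiableAt.comp x h1
  have hDφd : ∀ i : Fin n,
      DifferentiableAt ℝ (fun y => fderiv ℝ φ y (EuclideanSpace.single i 1)) x := by
    intro i
    have h1 : DifferentiableAt ℝ (fderiv ℝ φ) x :=
      ((hφ.contDiffAt hmem).fderiv_right (m := 1) (by norm_num)).differentiableAt (by norm_num)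
    exact (ContinuousLinearMap.apply ℝ ℝ
      (EuclideanSpace.single i 1)).differentiableAt.comp x h1
  -- key coordinatewise computation
  have key : ∀ i : Fin n,
      fderiv ℝ X x (EuclideanSpace.single i 1) i =
        Real.exp (η x) *
          ((φ x * fderiv ℝ (fun y => fderiv ℝ v y (EuclideanSpace.single i 1)) x
              (EuclideanSpace.single i 1)
            + fderiv ℝ v x (EuclideanSpace.single i 1) *
                fderiv ℝ φ x (EuclideanSpace.single i 1))
          - (v x * fderiv ℝ (fun y => fderiv ℝ φ y (EuclideanSpace.single i 1)) x
              (EuclideanSpace.single i 1)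
            + fderiv ℝ φ x (EuclideanSpace.single i 1) *
                fderiv ℝ v x (EuclideanSpace.single i 1)))
        + (φ x * fderiv ℝ v x (EuclideanSpace.single i 1)
            - v x * fderiv ℝ φ x (EuclideanSpace.single i 1)) *
          (Real.exp (η x) * fderiv ℝ η x (EuclideanSpace.single i 1)) := by
    intro i
    set F : EuclideanSpace ℝ (Fin n) → ℝ := fun y =>
      Real.exp (η y) * (φ y * fderiv ℝ v y (EuclideanSpace.single i 1)
        - v y * fderiv ℝ φ y (EuclideanSpace.single i 1)) with hFdef
    -- step 1: project
    have hproj : fderiv ℝ X x (EuclideanSpace.single i 1) i =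
        fderiv ℝ (fun y => X y i) x (EuclideanSpace.single i 1) := by
      have hcomp : (fun y => X y i) = (EuclideanSpace.proj i : _ →L[ℝ] ℝ) ∘ X := rfl
      rw [hcomp, fderiv_comp (x := x) (EuclideanSpace.proj (𝕜 := ℝ) i).differentiableAt hXd,
        ContinuousLinearMap.fderiv]
      rfl
    -- step 2: eventual equality with F
    have heq : (fun y => X y i) =ᶠ[𝓝 x] F := by
      filter_upwards [hmem] with y hy
      have hgrad : gradient (fun z => v z / φ z) y i =
          v y * (-((φ y) ^ 2)⁻¹ * fderiv ℝ φ y (EuclideanSpace.single i 1))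
            + (φ y)⁻¹ * fderiv ℝ v y (EuclideanSpace.single i 1) := by
        rw [gradient_apply_single, (hσ' y hy).fderiv]
        simp [smul_eq_mul]
      have hne := hφne y hy
      simp only [hXdef, PiLp.smul_apply, smul_eq_mul, hgrad, hFdef]
      field_simp
      ring
    -- step 3: derivative of F
    have hF : HasFDerivAt F
        (Real.exp (η x) •
          ((φ x • fderiv ℝ (fun y => fderiv ℝ v y (EuclideanSpace.single i 1)) x
              + fderiv ℝ v x (EuclideanSpace.single i 1) • fderiv ℝ φ x)
            - (v x • fderiv ℝ (fun y => fderiv ℝ φ y (EuclideanSpace.single i 1)) x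
              + fderiv ℝ φ x (EuclideanSpace.single i 1) • fderiv ℝ v x))
          + (φ x * fderiv ℝ v x (EuclideanSpace.single i 1)
              - v x * fderiv ℝ φ x (EuclideanSpace.single i 1)) •
            (Real.exp (η x) • fderiv ℝ η x)) x := by
      have hexp : HasFDerivAt (fun y => Real.exp (η y))
          (Real.exp (η x) • fderiv ℝ η x) x := (hηd x hx).hasFDerivAt.exp
      have hA : HasFDerivAt
          (fun y => φ y * fderiv ℝ v y (EuclideanSpace.single i 1)
            - v y * fderiv ℝ φ y (EuclideanSpace.single i 1))
          ((φ x • fderiv ℝ (fun y => fderiv ℝ v y (EuclideanSpace.single i 1)) x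
              + fderiv ℝ v x (EuclideanSpace.single i 1) • fderiv ℝ φ x)
            - (v x • fderiv ℝ (fun y => fderiv ℝ φ y (EuclideanSpace.single i 1)) x
              + fderiv ℝ φ x (EuclideanSpace.single i 1) • fderiv ℝ v x)) x :=
        ((hφd x hx).hasFDerivAt.mul (hDvd i).hasFDerivAt).sub
          ((hvd x hx).hasFDerivAt.mul (hDφd i).hasFDerivAt)
      exact hexp.mul hA
    rw [hproj, heq.fderiv_eq, hF.fderiv]
    simp [ContinuousLinearMap.add_apply, ContinuousLinearMap.smul_apply,
      ContinuousLinearMap.sub_apply, smul_eq_mul]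
  -- sum up
  have hdiv : divergence X x =
      Real.exp (η x) * (φ x *
          (laplacian v x + ⟪gradient η x, gradient v x⟫)
        - v x * (laplacian φ x + ⟪gradient η x, gradient φ x⟫)) := by
    rw [divergence]
    rw [Finset.sum_congr rfl (fun i _ => key i)]
    rw [laplacian, laplacian, inner_gradient_eq_sum, inner_gradient_eq_sum,
      ← Finset.sum_add_distrib, ← Finset.sum_add_distrib,
      Finset.mul_sum, Finset.mul_sum, ← Finset.sum_sub_distrib, Finset.mul_sum]
    exact Finset.sum_congr rfl fun i _ => by ring
  rw [hdiv]
  have hA := hvsub x hx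
  have hB := hφeig x hx
  have hφx := hφpos x hx
  have hLHS : lam * Real.exp (η x) * (v x / φ x) * φ x ^ 2
      = lam * Real.exp (η x) * v x * φ x := by
    field_simp
  rw [hLHS]
  have hB' : laplacian φ x + ⟪gradient η x, gradient φ x⟫
      = -lam * φ x - c x * φ x := by linarith
  rw [hB']
  nlinarith [mul_nonneg (mul_nonneg (Real.exp_pos (η x)).le hφx.le) hA,
    Real.exp_pos (η x)]
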